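/- If a linear cocycle 𝒜 admits a tempered exponential dichotomy, then there exists a tempered random variable C : Ω → (0,∞) such that the pair (L^∞(Ω,X), L^∞_C(Ω,X)) is admissible for 𝒜: for each g ∈ L^∞_C(Ω,X) there exists a unique f ∈ L^∞(Ω,X) with f(ω) − A(σ^{-1}ω) f(σ^{-1}ω) = g(ω) for ℙ-a.e. ω. -/

import Mathlib

open MeasureTheory Filter

/-- `𝒜` is a linear cocycle over `σ`. -/
def IsCocycle {Ω X : Type*} [NormedAddCommGroup X] [NormedSpace ℝ X]
    (σ : Ω → Ω) (𝒜 : Ω → ℕ → X →L[ℝ] X) : Prop :=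
  (∀ ω, 𝒜 ω 0 = ContinuousLinearMap.id ℝ X) ∧
    ∀ ω (m n : ℕ), 𝒜 ω (n + m) = (𝒜 (σ^[m] ω) n).comp (𝒜 ω m)

/-- A tempered exponential dichotomy for the cocycle `𝒜` over the invertible system
`σ`: measurable equivariant projections `P` (stable) with complement `Id - P`
(unstable), a backwards cocycle `B ω n` (the inverse `𝒜(ω, -n)` of `𝒜(σ^{-n}ω, n)`
restricted to the unstable direction), a tempered random variable `K > 0` and a rate
`lam > 0` realizing the exponential bounds. -/
structure Dichotomy {Ω X : Type*} [MeasurableSpace Ω]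
    [NormedAddCommGroup X] [NormedSpace ℝ X] [MeasurableSpace X] [BorelSpace X]
    (μ : Measure Ω) (σ : Ω ≃ᵐ Ω) (𝒜 : Ω → ℕ → X →L[ℝ] X) where
  P : Ω → X →L[ℝ] X
  B : Ω → ℕ → X →L[ℝ] X
  K : Ω → ℝ
  lam : ℝ
  lam_pos : 0 < lam
  K_pos : ∀ ω, 0 < K ω
  K_meas : Measurable K
  tempered_pos : ∀ᵐ ω ∂μ,
    Tendsto (fun n : ℕ => Real.log (K (σ^[n] ω)) / (n : ℝ)) atTop (nhds 0)
  tempered_neg : ∀ᵐ ω ∂μ,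
    Tendsto (fun n : ℕ => Real.log (K (σ.symm^[n] ω)) / (n : ℝ)) atTop (nhds 0)
  idem : ∀ ω, (P ω).comp (P ω) = P ω
  P_meas : ∀ x : X, Measurable fun ω => P ω x
  equivar : ∀ ω, (P (σ ω)).comp (𝒜 ω 1) = (𝒜 ω 1).comp (P ω)
  inv_right : ∀ ω (n : ℕ),
    (𝒜 (σ.symm^[n] ω) n).comp ((B ω n).comp (ContinuousLinearMap.id ℝ X - P ω)) =
      ContinuousLinearMap.id ℝ X - P ω
  inv_left : ∀ ω (n : ℕ),
    (B ω n).comp ((𝒜 (σ.symm^[n] ω) n).comp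
        (ContinuousLinearMap.id ℝ X - P (σ.symm^[n] ω))) =
      ContinuousLinearMap.id ℝ X - P (σ.symm^[n] ω)
  B_ker : ∀ ω (n : ℕ),
    (P (σ.symm^[n] ω)).comp ((B ω n).comp (ContinuousLinearMap.id ℝ X - P ω)) = 0
  bound_s : ∀ᵐ ω ∂μ, ∀ n : ℕ,
    ‖(𝒜 ω n).comp (P ω)‖ ≤ K ω * Real.exp (-lam * n)
  bound_u : ∀ᵐ ω ∂μ, ∀ n : ℕ,
    ‖(B ω n).comp (ContinuousLinearMap.id ℝ X - P ω)‖ ≤ K ω * Real.exp (-lam * n)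

/-- Membership in the weighted space `L^∞_C(Ω, X)`: measurable with
`esssup C(ω)‖f(ω)‖ < ∞`. -/
def MemLinfW {Ω X : Type*} [MeasurableSpace Ω] [NormedAddCommGroup X]
    [MeasurableSpace X] (μ : MeasureTheory.Measure Ω) (C : Ω → ℝ) (f : Ω → X) : Prop :=
  Measurable f ∧ ∃ M : ℝ, ∀ᵐ ω ∂μ, C ω * ‖f ω‖ ≤ M

/-- The pair `(L^∞_{C₁}, L^∞_{C₂})` is admissible for the cocycle with generator `A`:
for every `g ∈ L^∞_{C₂}` there is an (a.e.-essentially) unique `f ∈ L^∞_{C₁}` with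
`f(ω) − A(σ^{-1}ω) f(σ^{-1}ω) = g(ω)` a.e. -/
def Admissible {Ω X : Type*} [MeasurableSpace Ω] [NormedAddCommGroup X]
    [NormedSpace ℝ X] [MeasurableSpace X] (μ : MeasureTheory.Measure Ω) (σ : Ω ≃ᵐ Ω)
    (A : Ω → X →L[ℝ] X) (C₁ C₂ : Ω → ℝ) : Prop :=
  ∀ g : Ω → X, MemLinfW μ C₂ g →
    ∃ f : Ω → X,
      (MemLinfW μ C₁ f ∧ ∀ᵐ ω ∂μ, f ω - A (σ.symm ω) (f (σ.symm ω)) = g ω) ∧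
      ∀ f' : Ω → X,
        (MemLinfW μ C₁ f' ∧ ∀ᵐ ω ∂μ, f' ω - A (σ.symm ω) (f' (σ.symm ω)) = g ω) →
        f' =ᵐ[μ] f

/-- A positive random variable `K` is tempered:
`(1/n) log K(σ^{±n} ω) → 0` almost surely. -/
def Tempered {Ω : Type*} [MeasurableSpace Ω] (μ : MeasureTheory.Measure Ω)
    (σ : Ω ≃ᵐ Ω) (K : Ω → ℝ) : Prop :=
  ∀ᵐ ω ∂μ,
    Filter.Tendsto (fun n : ℕ => Real.log (K (σ^[n] ω)) / (n : ℝ))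
      Filter.atTop (nhds 0) ∧
    Filter.Tendsto (fun n : ℕ => Real.log (K (σ.symm^[n] ω)) / (n : ℝ))
      Filter.atTop (nhds 0)

section AuxLemmas
set_option linter.unusedSectionVars false

open TopologicalSpace

variable {Ω X : Type*} [MeasurableSpace Ω]
  [NormedAddCommGroup X] [NormedSpace ℝ X]
  [MeasurableSpace X] [BorelSpace X]

theorem aux_meas_eval [SecondCountableTopology X] {T : Ω → X →L[ℝ] X}
    (hT : ∀ x : X, Measurable fun ω => T ω x) {h : Ω → X} (hh : Measurable h) :
    Measurable fun ω => T ω (h ω) := by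
  classical
  have hsm : StronglyMeasurable h := hh.stronglyMeasurable
  have key : ∀ k : ℕ, Measurable fun ω => T ω (hsm.approx k ω) := by
    intro k
    have heq : (fun ω => T ω (hsm.approx k ω)) =
        fun ω => ∑ c ∈ (hsm.approx k).range,
          if hsm.approx k ω = c then T ω c else 0 := by
      funext ω
      rw [Finset.sum_eq_single_of_mem (hsm.approx k ω)
        (SimpleFunc.mem_range_self _ ω) (fun b _ hb => if_neg (Ne.symm hb))]
      simp
    rw [heq]
    refine Finset.measurable_sum _ fun c _ => ?_
    exact Measurable.ite ((hsm.approx k).measurableSet_fiber c) (hT c) measurable_const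
  refine measurable_of_tendsto_metrizable key (tendsto_pi_nhds.mpr fun ω => ?_)
  exact ((T ω).continuous.tendsto (h ω)).comp (hsm.tendsto_approx ω)

theorem aux_measA [SecondCountableTopology X] (σ : Ω ≃ᵐ Ω) (𝒜 : Ω → ℕ → X →L[ℝ] X)
    (hcoc : IsCocycle (⇑σ) 𝒜) (hmeas : ∀ x : X, Measurable fun ω => 𝒜 ω 1 x)
    (n : ℕ) : ∀ x : X, Measurable fun ω => 𝒜 ω n x := by
  induction n with
  | zero =>
      intro x
      simp only [hcoc.1, ContinuousLinearMap.id_apply]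
      exact measurable_const
  | succ n ih =>
      intro x
      have heq : (fun ω => 𝒜 ω (n + 1) x) = fun ω => 𝒜 (σ ω) n (𝒜 ω 1 x) := by
        funext ω
        rw [hcoc.2 ω 1 n, ContinuousLinearMap.comp_apply, Function.iterate_one]
      rw [heq]
      exact aux_meas_eval (fun y => (ih y).comp σ.measurable) (hmeas x)

theorem aux_iter_symm (σ : Ω ≃ᵐ Ω) (n : ℕ) (ω : Ω) : σ^[n] (σ.symm^[n] ω) = ω := by
  have h : Function.LeftInverse (⇑σ) (⇑σ.symm) := fun x => σ.apply_symm_apply x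
  exact h.iterate n ω

theorem aux_symm_iter (σ : Ω ≃ᵐ Ω) (n : ℕ) (ω : Ω) : σ.symm^[n] (σ^[n] ω) = ω := by
  have h : Function.LeftInverse (⇑σ.symm) (⇑σ) := fun x => σ.symm_apply_apply x
  exact h.iterate n ω

theorem aux_coc_succ {σ : Ω → Ω} {𝒜 : Ω → ℕ → X →L[ℝ] X} (hcoc : IsCocycle σ 𝒜)
    (ω : Ω) (n : ℕ) : 𝒜 ω (n + 1) = (𝒜 (σ^[n] ω) 1).comp (𝒜 ω n) := by
  have h := hcoc.2 ω n 1
  rwa [Nat.add_comm 1 n] at h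

theorem aux_coc_succ' {σ : Ω → Ω} {𝒜 : Ω → ℕ → X →L[ℝ] X} (hcoc : IsCocycle σ 𝒜)
    (ω : Ω) (n : ℕ) : 𝒜 ω (n + 1) = (𝒜 (σ ω) n).comp (𝒜 ω 1) := by
  have h := hcoc.2 ω 1 n
  rwa [Function.iterate_one] at h

theorem aux_idem_apply {μ : MeasureTheory.Measure Ω} {σ : Ω ≃ᵐ Ω}
    {𝒜 : Ω → ℕ → X →L[ℝ] X} (D : Dichotomy μ σ 𝒜) (ω : Ω) (v : X) :
    D.P ω (D.P ω v) = D.P ω v := by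
  have h := ContinuousLinearMap.ext_iff.mp (D.idem ω) v
  simpa using h

theorem aux_equivar_apply {μ : MeasureTheory.Measure Ω} {σ : Ω ≃ᵐ Ω}
    {𝒜 : Ω → ℕ → X →L[ℝ] X} (D : Dichotomy μ σ 𝒜) (ω : Ω) (v : X) :
    D.P (σ ω) (𝒜 ω 1 v) = 𝒜 ω 1 (D.P ω v) := by
  have h := ContinuousLinearMap.ext_iff.mp (D.equivar ω) v
  simpa using h

theorem aux_inv_right_apply {μ : MeasureTheory.Measure Ω} {σ : Ω ≃ᵐ Ω}
    {𝒜 : Ω → ℕ → X →L[ℝ] X} (D : Dichotomy μ σ 𝒜) (ω : Ω) (n : ℕ) (v : X) :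
    𝒜 (σ.symm^[n] ω) n (D.B ω n (v - D.P ω v)) = v - D.P ω v := by
  have h := ContinuousLinearMap.ext_iff.mp (D.inv_right ω n) v
  simpa using h

theorem aux_inv_left_apply {μ : MeasureTheory.Measure Ω} {σ : Ω ≃ᵐ Ω}
    {𝒜 : Ω → ℕ → X →L[ℝ] X} (D : Dichotomy μ σ 𝒜) (ω : Ω) (n : ℕ) (v : X) :
    D.B ω n (𝒜 (σ.symm^[n] ω) n (v - D.P (σ.symm^[n] ω) v)) =
      v - D.P (σ.symm^[n] ω) v := by
  have h := ContinuousLinearMap.ext_iff.mp (D.inv_left ω n) v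
  simpa using h

theorem aux_B_ker_apply {μ : MeasureTheory.Measure Ω} {σ : Ω ≃ᵐ Ω}
    {𝒜 : Ω → ℕ → X →L[ℝ] X} (D : Dichotomy μ σ 𝒜) (ω : Ω) (n : ℕ) (v : X) :
    D.P (σ.symm^[n] ω) (D.B ω n (v - D.P ω v)) = 0 := by
  have h := ContinuousLinearMap.ext_iff.mp (D.B_ker ω n) v
  simpa using h

theorem aux_equivarN {μ : MeasureTheory.Measure Ω} {σ : Ω ≃ᵐ Ω}
    {𝒜 : Ω → ℕ → X →L[ℝ] X} (hcoc : IsCocycle (⇑σ) 𝒜) (D : Dichotomy μ σ 𝒜)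
    (n : ℕ) (ω : Ω) (v : X) :
    D.P (σ^[n] ω) (𝒜 ω n v) = 𝒜 ω n (D.P ω v) := by
  induction n with
  | zero => simp [hcoc.1]
  | succ n ih =>
      rw [aux_coc_succ hcoc ω n]
      simp only [ContinuousLinearMap.comp_apply]
      rw [Function.iterate_succ_apply', aux_equivar_apply D (σ^[n] ω) (𝒜 ω n v), ih]

end AuxLemmas
section AuxLemmas2
set_option linter.unusedSectionVars false
set_option maxHeartbeats 1000000

open TopologicalSpace

variable {Ω X : Type*} [MeasurableSpace Ω]
  [NormedAddCommGroup X] [NormedSpace ℝ X]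
  [MeasurableSpace X] [BorelSpace X]

theorem aux_B_zero {μ : MeasureTheory.Measure Ω} {σ : Ω ≃ᵐ Ω}
    {𝒜 : Ω → ℕ → X →L[ℝ] X} (hcoc : IsCocycle (⇑σ) 𝒜) (D : Dichotomy μ σ 𝒜)
    (ω : Ω) (v : X) :
    D.B ω 0 (v - D.P ω v) = v - D.P ω v := by
  have h := aux_inv_right_apply D ω 0 v
  rwa [hcoc.1, ContinuousLinearMap.id_apply] at h

theorem aux_B_step {μ : MeasureTheory.Measure Ω} {σ : Ω ≃ᵐ Ω}
    {𝒜 : Ω → ℕ → X →L[ℝ] X} (hcoc : IsCocycle (⇑σ) 𝒜) (D : Dichotomy μ σ 𝒜)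
    (ω : Ω) (n : ℕ) (v : X) :
    𝒜 (σ.symm^[n + 1] ω) 1 (D.B ω (n + 1) (v - D.P ω v)) =
      D.B ω n (v - D.P ω v) := by
  have hab : σ (σ.symm^[n + 1] ω) = σ.symm^[n] ω := by
    rw [Function.iterate_succ_apply' (⇑σ.symm) n ω, MeasurableEquiv.apply_symm_apply]
  have hx1 : 𝒜 (σ.symm^[n + 1] ω) (n + 1) (D.B ω (n + 1) (v - D.P ω v)) = v - D.P ω v :=
    aux_inv_right_apply D ω (n + 1) v
  have hy1 : 𝒜 (σ.symm^[n] ω) n (D.B ω n (v - D.P ω v)) = v - D.P ω v :=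
    aux_inv_right_apply D ω n v
  have hx2 : D.P (σ.symm^[n + 1] ω) (D.B ω (n + 1) (v - D.P ω v)) = 0 :=
    aux_B_ker_apply D ω (n + 1) v
  have hy2 : D.P (σ.symm^[n] ω) (D.B ω n (v - D.P ω v)) = 0 :=
    aux_B_ker_apply D ω n v
  set x := D.B ω (n + 1) (v - D.P ω v) with hxdef
  set y := D.B ω n (v - D.P ω v) with hydef
  have hPz : D.P (σ.symm^[n] ω) (𝒜 (σ.symm^[n + 1] ω) 1 x - y) = 0 := by
    have he := aux_equivar_apply D (σ.symm^[n + 1] ω) x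
    rw [hab] at he
    rw [map_sub, he, hx2, map_zero, hy2, sub_zero]
  have hAz : 𝒜 (σ.symm^[n] ω) n (𝒜 (σ.symm^[n + 1] ω) 1 x - y) = 0 := by
    have hc := aux_coc_succ' hcoc (σ.symm^[n + 1] ω) n
    rw [hab] at hc
    have h3 : 𝒜 (σ.symm^[n] ω) n (𝒜 (σ.symm^[n + 1] ω) 1 x) = v - D.P ω v := by
      rw [← ContinuousLinearMap.comp_apply, ← hc]
      exact hx1
    rw [map_sub, h3, hy1, sub_self]
  have hinv := aux_inv_left_apply D ω n (𝒜 (σ.symm^[n + 1] ω) 1 x - y)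
  rw [hPz, sub_zero, hAz, map_zero] at hinv
  exact (sub_eq_zero.mp hinv.symm)

theorem aux_B_meas [TopologicalSpace.SeparableSpace X]
    {μ : MeasureTheory.Measure Ω} {σ : Ω ≃ᵐ Ω}
    {𝒜 : Ω → ℕ → X →L[ℝ] X} (hcoc : IsCocycle (⇑σ) 𝒜)
    (hmeas : ∀ x : X, Measurable fun ω => 𝒜 ω 1 x)
    (D : Dichotomy μ σ 𝒜) {g : Ω → X} (hg : Measurable g) (n : ℕ) :
    Measurable fun ω => D.B (σ^[n] ω) n (g (σ^[n] ω) - D.P (σ^[n] ω) (g (σ^[n] ω))) := by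
  classical
  haveI : SecondCountableTopology X := UniformSpace.secondCountable_of_separable X
  haveI : Nonempty X := ⟨0⟩
  set d : ℕ → X := TopologicalSpace.denseSeq X with hd
  have hdense : DenseRange d := TopologicalSpace.denseRange_denseSeq X
  have hτ : Measurable fun ω => σ^[n] ω := σ.measurable.iterate n
  have hwmeas : Measurable fun ω => g (σ^[n] ω) - D.P (σ^[n] ω) (g (σ^[n] ω)) :=
    (hg.comp hτ).sub (aux_meas_eval (fun x => (D.P_meas x).comp hτ) (hg.comp hτ))
  -- abbreviations
  set w : Ω → X := fun ω => g (σ^[n] ω) - D.P (σ^[n] ω) (g (σ^[n] ω)) with hwdef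
  set y : Ω → X := fun ω => D.B (σ^[n] ω) n (w ω) with hydef
  show Measurable y
  have hPy : ∀ ω, D.P ω (y ω) = 0 := by
    intro ω
    have h := aux_B_ker_apply D (σ^[n] ω) n (g (σ^[n] ω))
    rwa [aux_symm_iter σ n ω] at h
  have hAy : ∀ ω, 𝒜 ω n (y ω) = w ω := by
    intro ω
    have h := aux_inv_right_apply D (σ^[n] ω) n (g (σ^[n] ω))
    rwa [aux_symm_iter σ n ω] at h
  -- approximating sequence
  have hex : ∀ (k : ℕ) (ω : Ω),
      ∃ m, ‖𝒜 ω n (d m - D.P ω (d m)) - w ω‖ < 1 / ((k : ℝ) + 1) := by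
    intro k ω
    set L : X →L[ℝ] X := (𝒜 ω n).comp (ContinuousLinearMap.id ℝ X - D.P ω) with hL
    have hLy : L (y ω) = w ω := by
      rw [hL]
      simp only [ContinuousLinearMap.comp_apply, ContinuousLinearMap.sub_apply,
        ContinuousLinearMap.id_apply]
      rw [hPy ω, sub_zero, hAy ω]
    have hkpos : (0 : ℝ) < 1 / ((k : ℝ) + 1) := by positivity
    have hεpos : (0 : ℝ) < (1 / ((k : ℝ) + 1)) / (‖L‖ + 1) := by positivity
    obtain ⟨m, hm⟩ := hdense.exists_dist_lt (y ω) hεpos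
    refine ⟨m, ?_⟩
    have hLd : L (d m) = 𝒜 ω n (d m - D.P ω (d m)) := by
      rw [hL]
      simp only [ContinuousLinearMap.comp_apply, ContinuousLinearMap.sub_apply,
        ContinuousLinearMap.id_apply]
    have h1 : 𝒜 ω n (d m - D.P ω (d m)) - w ω = L (d m - y ω) := by
      rw [← hLd, ← hLy, ← map_sub]
    rw [h1]
    have h2 : ‖L (d m - y ω)‖ ≤ ‖L‖ * ‖d m - y ω‖ := L.le_opNorm _
    have h3 : ‖d m - y ω‖ < (1 / ((k : ℝ) + 1)) / (‖L‖ + 1) := by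
      rw [norm_sub_rev, ← dist_eq_norm]
      exact hm
    calc ‖L (d m - y ω)‖ ≤ ‖L‖ * ‖d m - y ω‖ := h2
      _ ≤ ‖L‖ * ((1 / ((k : ℝ) + 1)) / (‖L‖ + 1)) :=
          mul_le_mul_of_nonneg_left h3.le (norm_nonneg L)
      _ < (‖L‖ + 1) * ((1 / ((k : ℝ) + 1)) / (‖L‖ + 1)) :=
          mul_lt_mul_of_pos_right (lt_add_one _) hεpos
      _ = 1 / ((k : ℝ) + 1) := by
          rw [mul_comm, div_mul_cancel₀]
          positivity
  let ψ : ℕ → Ω → X := fun k ω => d (Nat.find (hex k ω)) - D.P ω (d (Nat.find (hex k ω)))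
  have hψmeas : ∀ k, Measurable (ψ k) := by
    intro k
    refine Measurable.find (f := fun m ω => d m - D.P ω (d m))
      (p := fun m ω => ‖𝒜 ω n (d m - D.P ω (d m)) - w ω‖ < 1 / ((k : ℝ) + 1))
      (fun m => measurable_const.sub (D.P_meas (d m))) (fun m => ?_) (hex k)
    have hFm : Measurable fun ω => ‖𝒜 ω n (d m - D.P ω (d m)) - w ω‖ :=
      ((aux_meas_eval (aux_measA σ 𝒜 hcoc hmeas n)
        (measurable_const.sub (D.P_meas (d m)))).sub hwmeas).norm
    exact measurableSet_lt hFm measurable_const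
  have hψten : ∀ ω, Filter.Tendsto (fun k => ψ k ω) Filter.atTop (nhds (y ω)) := by
    intro ω
    have hPψ : ∀ k, D.P ω (ψ k ω) = 0 := by
      intro k
      show D.P ω (d (Nat.find (hex k ω)) - D.P ω (d (Nat.find (hex k ω)))) = 0
      rw [map_sub, aux_idem_apply, sub_self]
    have hkey : ∀ k, ψ k ω - y ω = D.B (σ^[n] ω) n (𝒜 ω n (ψ k ω) - w ω) := by
      intro k
      have hinv := aux_inv_left_apply D (σ^[n] ω) n (ψ k ω)
      rw [aux_symm_iter σ n ω, hPψ k, sub_zero] at hinv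
      rw [map_sub, hinv, hydef]
    have hbnd : ∀ k, ‖ψ k ω - y ω‖ ≤ ‖D.B (σ^[n] ω) n‖ * (1 / ((k : ℝ) + 1)) := by
      intro k
      rw [hkey k]
      calc ‖D.B (σ^[n] ω) n (𝒜 ω n (ψ k ω) - w ω)‖
          ≤ ‖D.B (σ^[n] ω) n‖ * ‖𝒜 ω n (ψ k ω) - w ω‖ := (D.B (σ^[n] ω) n).le_opNorm _
        _ ≤ ‖D.B (σ^[n] ω) n‖ * (1 / ((k : ℝ) + 1)) :=
            mul_le_mul_of_nonneg_left (Nat.find_spec (hex k ω)).le (norm_nonneg _)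
    have hzero : Filter.Tendsto
        (fun k : ℕ => ‖D.B (σ^[n] ω) n‖ * (1 / ((k : ℝ) + 1))) Filter.atTop (nhds 0) := by
      have := tendsto_one_div_add_atTop_nhds_zero_nat.const_mul (‖D.B (σ^[n] ω) n‖)
      rwa [mul_zero] at this
    have hsub : Filter.Tendsto (fun k => ψ k ω - y ω) Filter.atTop (nhds 0) :=
      squeeze_zero_norm hbnd hzero
    have := hsub.add (tendsto_const_nhds (x := y ω))
    simpa using this
  exact measurable_of_tendsto_metrizable hψmeas (tendsto_pi_nhds.mpr hψten)

theorem aux_decay {u : ℕ → ℝ} (hu : ∀ n, 0 < u n)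
    (ht : Filter.Tendsto (fun n : ℕ => Real.log (u n) / (n : ℝ)) Filter.atTop (nhds 0))
    {lam : ℝ} (hlam : 0 < lam) :
    Filter.Tendsto (fun n : ℕ => u n * Real.exp (-lam * n)) Filter.atTop (nhds 0) := by
  have h0 : Filter.Tendsto (fun n : ℕ => Real.log (u n) / (n : ℝ) - lam)
      Filter.atTop (nhds (0 - lam)) := ht.sub_const lam
  rw [zero_sub] at h0
  have h1 : Filter.Tendsto (fun n : ℕ => (Real.log (u n) / (n : ℝ) - lam) * (n : ℝ))
      Filter.atTop Filter.atBot :=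
    Filter.Tendsto.neg_mul_atTop (by linarith) h0 tendsto_natCast_atTop_atTop
  have h2 := Real.tendsto_exp_atBot.comp h1
  refine Filter.Tendsto.congr' ?_ h2
  filter_upwards [Filter.eventually_ge_atTop 1] with m hm
  have hm0 : (m : ℝ) ≠ 0 := by
    have : (1 : ℝ) ≤ (m : ℝ) := by exact_mod_cast hm
    linarith
  show Real.exp ((Real.log (u m) / (m : ℝ) - lam) * (m : ℝ)) = u m * Real.exp (-lam * m)
  rw [sub_mul, div_mul_cancel₀ _ hm0, sub_eq_add_neg, Real.exp_add, Real.exp_log (hu m),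
    neg_mul]

end AuxLemmas2
set_option maxHeartbeats 2000000 in
/-- If a linear cocycle admits a tempered exponential dichotomy, then
there is a tempered random variable `C > 0` such that the pair
`(L^∞(Ω,X), L^∞_C(Ω,X))` is admissible for the cocycle. -/
theorem stmt_9 {Ω X : Type*} [MeasurableSpace Ω]
    [NormedAddCommGroup X] [NormedSpace ℝ X] [CompleteSpace X]
    [MeasurableSpace X] [BorelSpace X] [TopologicalSpace.SeparableSpace X]
    (μ : Measure Ω) [IsProbabilityMeasure μ] (σ : Ω ≃ᵐ Ω)
    (hσ : MeasurePreserving σ μ μ) (herg : Ergodic (⇑σ) μ)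
    (𝒜 : Ω → ℕ → X →L[ℝ] X) (hcoc : IsCocycle (⇑σ) 𝒜)
    (hmeas : ∀ x : X, Measurable fun ω => 𝒜 ω 1 x)
    (D : Dichotomy μ σ 𝒜) :
    ∃ C : Ω → ℝ, Measurable C ∧ (∀ ω, 0 < C ω) ∧ Tempered μ σ C ∧
      Admissible μ σ (fun ω => 𝒜 ω 1) (fun _ => 1) C := by
  classical
  haveI : SecondCountableTopology X := UniformSpace.secondCountable_of_separable X
  have hσs : MeasurePreserving (⇑σ.symm) μ μ := MeasurePreserving.symm σ hσ
  have trF : ∀ {p : Ω → Prop}, (∀ᵐ ω ∂μ, p ω) → ∀ n : ℕ, ∀ᵐ ω ∂μ, p (σ^[n] ω) :=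
    fun hp n => ((hσ.iterate n).quasiMeasurePreserving).ae hp
  have trB : ∀ {p : Ω → Prop}, (∀ᵐ ω ∂μ, p ω) → ∀ n : ℕ, ∀ᵐ ω ∂μ, p (σ.symm^[n] ω) :=
    fun hp n => ((hσs.iterate n).quasiMeasurePreserving).ae hp
  refine ⟨fun ω => max (D.K ω) 1, D.K_meas.max measurable_const,
    fun ω => lt_of_lt_of_le one_pos (le_max_right _ _), ?_, ?_⟩
  · -- temperedness of C
    have habs : ∀ ω' : Ω, |Real.log (max (D.K ω') 1)| ≤ |Real.log (D.K ω')| := by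
      intro ω'
      rcases le_total (D.K ω') 1 with h | h
      · rw [max_eq_right h, Real.log_one, abs_zero]
        exact abs_nonneg _
      · rw [max_eq_left h]
    filter_upwards [D.tempered_pos, D.tempered_neg] with ω h1 h2
    constructor
    · refine squeeze_zero_norm (fun n => ?_)
        (by simpa [abs_zero] using h1.abs)
      show ‖Real.log (max (D.K (σ^[n] ω)) 1) / (n : ℝ)‖ ≤
        |Real.log (D.K (σ^[n] ω)) / (n : ℝ)|
      rw [Real.norm_eq_abs, abs_div, abs_div, div_eq_mul_inv, div_eq_mul_inv]
      exact mul_le_mul_of_nonneg_right (habs _) (inv_nonneg.mpr (abs_nonneg _))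
    · refine squeeze_zero_norm (fun n => ?_)
        (by simpa [abs_zero] using h2.abs)
      show ‖Real.log (max (D.K (σ.symm^[n] ω)) 1) / (n : ℝ)‖ ≤
        |Real.log (D.K (σ.symm^[n] ω)) / (n : ℝ)|
      rw [Real.norm_eq_abs, abs_div, abs_div, div_eq_mul_inv, div_eq_mul_inv]
      exact mul_le_mul_of_nonneg_right (habs _) (inv_nonneg.mpr (abs_nonneg _))
  · -- admissibility
    rintro g ⟨hgmeas, M, hgM⟩
    have hM0 : 0 ≤ M := by
      haveI : (MeasureTheory.ae μ).NeBot :=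
        MeasureTheory.ae_neBot.mpr (IsProbabilityMeasure.ne_zero μ)
      obtain ⟨ω₀, h₀⟩ := hgM.exists
      have h00 : 0 ≤ max (D.K ω₀) 1 * ‖g ω₀‖ :=
        mul_nonneg (le_of_lt (lt_of_lt_of_le one_pos (le_max_right _ _))) (norm_nonneg _)
      linarith
    have hKg : ∀ᵐ ω ∂μ, D.K ω * ‖g ω‖ ≤ M := by
      filter_upwards [hgM] with ω h
      exact le_trans (mul_le_mul_of_nonneg_right (le_max_left _ _) (norm_nonneg _)) h
    set r : ℝ := Real.exp (-D.lam) with hr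
    have hr0 : 0 ≤ r := Real.exp_nonneg _
    have hr1 : r < 1 := Real.exp_lt_one_iff.mpr (neg_lt_zero.mpr D.lam_pos)
    have hrn : ∀ n : ℕ, Real.exp (-D.lam * n) = r ^ n := fun n => by
      rw [hr, ← Real.exp_nat_mul, mul_comm]
    set s : ℕ → Ω → X := fun n ω =>
      𝒜 (σ.symm^[n] ω) n (D.P (σ.symm^[n] ω) (g (σ.symm^[n] ω))) with hs
    set y : ℕ → Ω → X := fun n ω =>
      D.B (σ^[n] ω) n (g (σ^[n] ω) - D.P (σ^[n] ω) (g (σ^[n] ω))) with hy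
    have hsmeas : ∀ n, Measurable (s n) := by
      intro n
      have hτ : Measurable fun ω => σ.symm^[n] ω := σ.symm.measurable.iterate n
      exact aux_meas_eval (T := fun ω => 𝒜 (σ.symm^[n] ω) n)
        (fun x => (aux_measA σ 𝒜 hcoc hmeas n x).comp hτ)
        (aux_meas_eval (fun x => (D.P_meas x).comp hτ) (hgmeas.comp hτ))
    have hymeas : ∀ n, Measurable (y n) := fun n => aux_B_meas hcoc hmeas D hgmeas n
    set F : ℕ → Ω → X := fun N ω => ∑ n ∈ Finset.range N, (s n ω - y (n + 1) ω) with hF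
    have hFmeas : ∀ N, Measurable (F N) := fun N =>
      Finset.measurable_sum _ fun n _ => (hsmeas n).sub (hymeas (n + 1))
    -- a.e. termwise bounds
    have hsb : ∀ᵐ ω ∂μ, ∀ n : ℕ, ‖s n ω‖ ≤ M * r ^ n := by
      have h1 : ∀ᵐ ω ∂μ, ∀ n : ℕ, ‖(𝒜 (σ.symm^[n] ω) n).comp (D.P (σ.symm^[n] ω))‖
          ≤ D.K (σ.symm^[n] ω) * Real.exp (-D.lam * n) := by
        rw [MeasureTheory.ae_all_iff]
        intro n
        filter_upwards [trB D.bound_s n] with ω h using h n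
      have h2 : ∀ᵐ ω ∂μ, ∀ n : ℕ, D.K (σ.symm^[n] ω) * ‖g (σ.symm^[n] ω)‖ ≤ M := by
        rw [MeasureTheory.ae_all_iff]
        intro n
        exact trB hKg n
      filter_upwards [h1, h2] with ω ha hb n
      have hcomp : s n ω =
          ((𝒜 (σ.symm^[n] ω) n).comp (D.P (σ.symm^[n] ω))) (g (σ.symm^[n] ω)) := by
        rw [ContinuousLinearMap.comp_apply]
      rw [hcomp, ← hrn n]
      calc ‖((𝒜 (σ.symm^[n] ω) n).comp (D.P (σ.symm^[n] ω))) (g (σ.symm^[n] ω))‖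
          ≤ ‖(𝒜 (σ.symm^[n] ω) n).comp (D.P (σ.symm^[n] ω))‖ * ‖g (σ.symm^[n] ω)‖ :=
            ContinuousLinearMap.le_opNorm _ _
        _ ≤ (D.K (σ.symm^[n] ω) * Real.exp (-D.lam * n)) * ‖g (σ.symm^[n] ω)‖ :=
            mul_le_mul_of_nonneg_right (ha n) (norm_nonneg _)
        _ = Real.exp (-D.lam * n) * (D.K (σ.symm^[n] ω) * ‖g (σ.symm^[n] ω)‖) := by ring
        _ ≤ Real.exp (-D.lam * n) * M :=
            mul_le_mul_of_nonneg_left (hb n) (Real.exp_nonneg _)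
        _ = M * Real.exp (-D.lam * n) := by ring
    have hyb : ∀ᵐ ω ∂μ, ∀ n : ℕ, ‖y n ω‖ ≤ M * r ^ n := by
      have h1 : ∀ᵐ ω ∂μ, ∀ n : ℕ,
          ‖(D.B (σ^[n] ω) n).comp (ContinuousLinearMap.id ℝ X - D.P (σ^[n] ω))‖
          ≤ D.K (σ^[n] ω) * Real.exp (-D.lam * n) := by
        rw [MeasureTheory.ae_all_iff]
        intro n
        filter_upwards [trF D.bound_u n] with ω h using h n
      have h2 : ∀ᵐ ω ∂μ, ∀ n : ℕ, D.K (σ^[n] ω) * ‖g (σ^[n] ω)‖ ≤ M := by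
        rw [MeasureTheory.ae_all_iff]
        intro n
        exact trF hKg n
      filter_upwards [h1, h2] with ω ha hb n
      have hcomp : y n ω =
          ((D.B (σ^[n] ω) n).comp (ContinuousLinearMap.id ℝ X - D.P (σ^[n] ω)))
            (g (σ^[n] ω)) := by
        rw [ContinuousLinearMap.comp_apply, ContinuousLinearMap.sub_apply,
          ContinuousLinearMap.id_apply]
      rw [hcomp, ← hrn n]
      calc ‖((D.B (σ^[n] ω) n).comp (ContinuousLinearMap.id ℝ X - D.P (σ^[n] ω)))
            (g (σ^[n] ω))‖
          ≤ ‖(D.B (σ^[n] ω) n).comp (ContinuousLinearMap.id ℝ X - D.P (σ^[n] ω))‖ *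
            ‖g (σ^[n] ω)‖ := ContinuousLinearMap.le_opNorm _ _
        _ ≤ (D.K (σ^[n] ω) * Real.exp (-D.lam * n)) * ‖g (σ^[n] ω)‖ :=
            mul_le_mul_of_nonneg_right (ha n) (norm_nonneg _)
        _ = Real.exp (-D.lam * n) * (D.K (σ^[n] ω) * ‖g (σ^[n] ω)‖) := by ring
        _ ≤ Real.exp (-D.lam * n) * M :=
            mul_le_mul_of_nonneg_left (hb n) (Real.exp_nonneg _)
        _ = M * Real.exp (-D.lam * n) := by ring
    -- summability and limit function
    have hc0 : 0 ≤ M + M * r := add_nonneg hM0 (mul_nonneg hM0 hr0)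
    have hterm : ∀ᵐ ω ∂μ, ∀ n : ℕ, ‖s n ω - y (n + 1) ω‖ ≤ (M + M * r) * r ^ n := by
      filter_upwards [hsb, hyb] with ω h1 h2 n
      calc ‖s n ω - y (n + 1) ω‖ ≤ ‖s n ω‖ + ‖y (n + 1) ω‖ := norm_sub_le _ _
        _ ≤ M * r ^ n + M * r ^ (n + 1) := add_le_add (h1 n) (h2 (n + 1))
        _ = (M + M * r) * r ^ n := by ring
    have hbsum : Summable (fun n : ℕ => (M + M * r) * r ^ n) :=
      (summable_geometric_of_lt_one hr0 hr1).mul_left _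
    set Mf : ℝ := ∑' n : ℕ, (M + M * r) * r ^ n with hMf
    have haeconv : ∀ᵐ ω ∂μ, ∃ l : X,
        Filter.Tendsto (fun N => F N ω) Filter.atTop (nhds l) := by
      filter_upwards [hterm] with ω h
      have hsumm : Summable fun n => s n ω - y (n + 1) ω :=
        Summable.of_norm_bounded hbsum h
      exact ⟨∑' n, (s n ω - y (n + 1) ω), hsumm.hasSum.tendsto_sum_nat⟩
    obtain ⟨f, hfmeas, hftend⟩ :=
      measurable_limit_of_tendsto_metrizable_ae
        (fun N => (hFmeas N).aemeasurable) haeconv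
    have hfbd : ∀ᵐ ω ∂μ, ‖f ω‖ ≤ Mf := by
      filter_upwards [hftend, hterm] with ω hc hb
      refine le_of_tendsto hc.norm (Filter.Eventually.of_forall fun N => ?_)
      calc ‖F N ω‖ ≤ ∑ n ∈ Finset.range N, ‖s n ω - y (n + 1) ω‖ := norm_sum_le _ _
        _ ≤ ∑ n ∈ Finset.range N, (M + M * r) * r ^ n :=
            Finset.sum_le_sum fun n _ => hb n
        _ ≤ Mf := Summable.sum_le_tsum _ (fun n _ => mul_nonneg hc0 (pow_nonneg hr0 n)) hbsum
    -- structural identities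
    have hs0 : ∀ ω, s 0 ω = D.P ω (g ω) := by
      intro ω
      show 𝒜 (σ.symm^[0] ω) 0 (D.P (σ.symm^[0] ω) (g (σ.symm^[0] ω))) = D.P ω (g ω)
      rw [hcoc.1]
      simp
    have hy0 : ∀ ω, y 0 ω = g ω - D.P ω (g ω) := by
      intro ω
      show D.B (σ^[0] ω) 0 (g (σ^[0] ω) - D.P (σ^[0] ω) (g (σ^[0] ω))) =
        g ω - D.P ω (g ω)
      simp only [Function.iterate_zero, id_eq]
      exact aux_B_zero hcoc D ω (g ω)
    have hstep_s : ∀ (ω : Ω) (n : ℕ), 𝒜 (σ.symm ω) 1 (s n (σ.symm ω)) = s (n + 1) ω := by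
      intro ω n
      have hpt : σ.symm^[n] (σ.symm ω) = σ.symm^[n + 1] ω :=
        (Function.iterate_succ_apply (⇑σ.symm) n ω).symm
      have hpt2 : σ^[n] (σ.symm^[n + 1] ω) = σ.symm ω := by
        rw [Function.iterate_succ_apply (⇑σ.symm) n ω]
        exact aux_iter_symm σ n (σ.symm ω)
      have hcs := aux_coc_succ hcoc (σ.symm^[n + 1] ω) n
      rw [hpt2] at hcs
      show 𝒜 (σ.symm ω) 1 (𝒜 (σ.symm^[n] (σ.symm ω)) n
          (D.P (σ.symm^[n] (σ.symm ω)) (g (σ.symm^[n] (σ.symm ω))))) =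
        𝒜 (σ.symm^[n + 1] ω) (n + 1) (D.P (σ.symm^[n + 1] ω) (g (σ.symm^[n + 1] ω)))
      rw [hpt, hcs, ContinuousLinearMap.comp_apply]
    have hstep_y : ∀ (ω : Ω) (n : ℕ),
        𝒜 (σ.symm ω) 1 (y (n + 1) (σ.symm ω)) = y n ω := by
      intro ω n
      have hpt : σ^[n + 1] (σ.symm ω) = σ^[n] ω := by
        rw [Function.iterate_succ_apply (⇑σ) n (σ.symm ω),
          MeasurableEquiv.apply_symm_apply]
      have hpt2 : σ.symm^[n + 1] (σ^[n] ω) = σ.symm ω := by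
        rw [Function.iterate_succ_apply' (⇑σ.symm) n (σ^[n] ω), aux_symm_iter σ n ω]
      have hstep := aux_B_step hcoc D (σ^[n] ω) n (g (σ^[n] ω))
      rw [hpt2] at hstep
      show 𝒜 (σ.symm ω) 1 (D.B (σ^[n + 1] (σ.symm ω)) (n + 1)
          (g (σ^[n + 1] (σ.symm ω)) -
            D.P (σ^[n + 1] (σ.symm ω)) (g (σ^[n + 1] (σ.symm ω))))) = y n ω
      rw [hpt]
      exact hstep
    have hgeo : Filter.Tendsto (fun N : ℕ => M * r ^ N) Filter.atTop (nhds 0) := by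
      have := (tendsto_pow_atTop_nhds_zero_of_lt_one hr0 hr1).const_mul M
      rwa [mul_zero] at this
    -- the a.e. equation
    have key : ∀ᵐ ω ∂μ, f ω - 𝒜 (σ.symm ω) 1 (f (σ.symm ω)) = g ω := by
      have hconv' : ∀ᵐ ω ∂μ, Filter.Tendsto (fun N => F N (σ.symm ω)) Filter.atTop
          (nhds (f (σ.symm ω))) := hσs.quasiMeasurePreserving.ae hftend
      filter_upwards [hftend, hconv', hsb, hyb] with ω hc hc' hsbω hybω
      have hNid : ∀ N, F N ω - 𝒜 (σ.symm ω) 1 (F N (σ.symm ω)) =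
          (s 0 ω + y 0 ω) - (s N ω + y N ω) := by
        intro N
        have hmap : 𝒜 (σ.symm ω) 1 (F N (σ.symm ω)) =
            ∑ n ∈ Finset.range N, (s (n + 1) ω - y n ω) := by
          rw [map_sum]
          refine Finset.sum_congr rfl fun n _ => ?_
          rw [map_sub, hstep_s ω n, hstep_y ω n]
        calc F N ω - 𝒜 (σ.symm ω) 1 (F N (σ.symm ω))
            = ∑ n ∈ Finset.range N, (s n ω - y (n + 1) ω) -
              ∑ n ∈ Finset.range N, (s (n + 1) ω - y n ω) := by rw [hmap]
          _ = ∑ n ∈ Finset.range N,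
              ((s n ω + y n ω) - (s (n + 1) ω + y (n + 1) ω)) := by
                rw [← Finset.sum_sub_distrib]
                exact Finset.sum_congr rfl fun n _ => by abel
          _ = (s 0 ω + y 0 ω) - (s N ω + y N ω) :=
              Finset.sum_range_sub' (fun i => s i ω + y i ω) N
      have hT1 : Filter.Tendsto (fun N => F N ω - 𝒜 (σ.symm ω) 1 (F N (σ.symm ω)))
          Filter.atTop (nhds (f ω - 𝒜 (σ.symm ω) 1 (f (σ.symm ω)))) :=
        hc.sub (((𝒜 (σ.symm ω) 1).continuous.tendsto _).comp hc')
      have hsz : Filter.Tendsto (fun N => s N ω) Filter.atTop (nhds 0) :=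
        squeeze_zero_norm hsbω hgeo
      have hyz : Filter.Tendsto (fun N => y N ω) Filter.atTop (nhds 0) :=
        squeeze_zero_norm hybω hgeo
      have hT2 : Filter.Tendsto (fun N => F N ω - 𝒜 (σ.symm ω) 1 (F N (σ.symm ω)))
          Filter.atTop (nhds (g ω)) := by
        have h1 : Filter.Tendsto (fun N => (s 0 ω + y 0 ω) - (s N ω + y N ω))
            Filter.atTop (nhds ((s 0 ω + y 0 ω) - (0 + 0))) :=
          tendsto_const_nhds.sub (hsz.add hyz)
        have h2 : (s 0 ω + y 0 ω) - ((0 : X) + 0) = g ω := by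
          rw [hs0 ω, hy0 ω]
          abel
        rw [h2] at h1
        exact Filter.Tendsto.congr (fun N => (hNid N).symm) h1
      exact tendsto_nhds_unique hT1 hT2
    refine ⟨f, ⟨⟨hfmeas, Mf, ?_⟩, key⟩, ?_⟩
    · filter_upwards [hfbd] with ω h
      rwa [one_mul]
    -- uniqueness
    rintro f' ⟨⟨hf'meas, M', hf'bd⟩, hf'eq⟩
    set R : ℝ := M' + Mf with hR
    have hheq : ∀ᵐ ω ∂μ, f' ω - f ω =
        𝒜 (σ.symm ω) 1 (f' (σ.symm ω) - f (σ.symm ω)) := by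
      filter_upwards [hf'eq, key] with ω h1 h2
      have h3 : f' ω - f ω - (𝒜 (σ.symm ω) 1 (f' (σ.symm ω)) -
          𝒜 (σ.symm ω) 1 (f (σ.symm ω))) =
          (f' ω - 𝒜 (σ.symm ω) 1 (f' (σ.symm ω))) -
          (f ω - 𝒜 (σ.symm ω) 1 (f (σ.symm ω))) := by abel
      rw [h1, h2, sub_self] at h3
      rw [map_sub]
      exact sub_eq_zero.mp h3
    have hhbd : ∀ᵐ ω ∂μ, ‖f' ω - f ω‖ ≤ R := by
      filter_upwards [hf'bd, hfbd] with ω h1 h2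
      rw [one_mul] at h1
      calc ‖f' ω - f ω‖ ≤ ‖f' ω‖ + ‖f ω‖ := norm_sub_le _ _
        _ ≤ M' + Mf := add_le_add h1 h2
    have heqF : ∀ᵐ ω ∂μ, ∀ n : ℕ, f' (σ^[n] ω) - f (σ^[n] ω) =
        𝒜 (σ.symm (σ^[n] ω)) 1 (f' (σ.symm (σ^[n] ω)) - f (σ.symm (σ^[n] ω))) :=
      MeasureTheory.ae_all_iff.mpr fun n => trF hheq n
    have heqB : ∀ᵐ ω ∂μ, ∀ n : ℕ, f' (σ.symm^[n] ω) - f (σ.symm^[n] ω) =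
        𝒜 (σ.symm (σ.symm^[n] ω)) 1
          (f' (σ.symm (σ.symm^[n] ω)) - f (σ.symm (σ.symm^[n] ω))) :=
      MeasureTheory.ae_all_iff.mpr fun n => trB hheq n
    have hbdF : ∀ᵐ ω ∂μ, ∀ n : ℕ, ‖f' (σ^[n] ω) - f (σ^[n] ω)‖ ≤ R :=
      MeasureTheory.ae_all_iff.mpr fun n => trF hhbd n
    have hbdB : ∀ᵐ ω ∂μ, ∀ n : ℕ, ‖f' (σ.symm^[n] ω) - f (σ.symm^[n] ω)‖ ≤ R :=
      MeasureTheory.ae_all_iff.mpr fun n => trB hhbd n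
    have hbs : ∀ᵐ ω ∂μ, ∀ n : ℕ, ‖(𝒜 (σ.symm^[n] ω) n).comp (D.P (σ.symm^[n] ω))‖
        ≤ D.K (σ.symm^[n] ω) * Real.exp (-D.lam * n) := by
      rw [MeasureTheory.ae_all_iff]
      intro n
      filter_upwards [trB D.bound_s n] with ω h using h n
    have hbu : ∀ᵐ ω ∂μ, ∀ n : ℕ,
        ‖(D.B (σ^[n] ω) n).comp (ContinuousLinearMap.id ℝ X - D.P (σ^[n] ω))‖
        ≤ D.K (σ^[n] ω) * Real.exp (-D.lam * n) := by
      rw [MeasureTheory.ae_all_iff]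
      intro n
      filter_upwards [trF D.bound_u n] with ω h using h n
    filter_upwards [heqF, heqB, hbdF, hbdB, hbs, hbu, D.tempered_pos, D.tempered_neg]
      with ω h_eqF h_eqB h_bdF h_bdB h_bs h_bu h_tp h_tn
    show f' ω = f ω
    have fwd : ∀ n : ℕ, f' (σ^[n] ω) - f (σ^[n] ω) = 𝒜 ω n (f' ω - f ω) := by
      intro n
      induction n with
      | zero => simp [hcoc.1]
      | succ n ih =>
          have he := h_eqF (n + 1)
          have hpt : σ.symm (σ^[n + 1] ω) = σ^[n] ω := by
            rw [Function.iterate_succ_apply' (⇑σ) n ω, MeasurableEquiv.symm_apply_apply]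
          rw [hpt] at he
          rw [he, ih, aux_coc_succ hcoc ω n, ContinuousLinearMap.comp_apply]
    have bwd : ∀ n : ℕ, f' ω - f ω =
        𝒜 (σ.symm^[n] ω) n (f' (σ.symm^[n] ω) - f (σ.symm^[n] ω)) := by
      intro n
      induction n with
      | zero => simp [hcoc.1]
      | succ n ih =>
          have he := h_eqB n
          rw [← Function.iterate_succ_apply' (⇑σ.symm) n ω] at he
          have hc := aux_coc_succ' hcoc (σ.symm^[n + 1] ω) n
          have hpt : σ (σ.symm^[n + 1] ω) = σ.symm^[n] ω := by
            rw [Function.iterate_succ_apply' (⇑σ.symm) n ω,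
              MeasurableEquiv.apply_symm_apply]
          rw [hpt] at hc
          rw [ih, he, ← ContinuousLinearMap.comp_apply, ← hc]
    have stable : ∀ n : ℕ, ‖D.P ω (f' ω - f ω)‖ ≤
        D.K (σ.symm^[n] ω) * Real.exp (-D.lam * n) * R := by
      intro n
      have h1 : D.P ω (f' ω - f ω) =
          ((𝒜 (σ.symm^[n] ω) n).comp (D.P (σ.symm^[n] ω)))
            (f' (σ.symm^[n] ω) - f (σ.symm^[n] ω)) := by
        rw [bwd n]
        have he := aux_equivarN hcoc D n (σ.symm^[n] ω)
          (f' (σ.symm^[n] ω) - f (σ.symm^[n] ω))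
        rw [aux_iter_symm σ n ω] at he
        rw [he, ContinuousLinearMap.comp_apply]
      rw [h1]
      calc ‖((𝒜 (σ.symm^[n] ω) n).comp (D.P (σ.symm^[n] ω)))
            (f' (σ.symm^[n] ω) - f (σ.symm^[n] ω))‖
          ≤ ‖(𝒜 (σ.symm^[n] ω) n).comp (D.P (σ.symm^[n] ω))‖ *
            ‖f' (σ.symm^[n] ω) - f (σ.symm^[n] ω)‖ := ContinuousLinearMap.le_opNorm _ _
        _ ≤ (D.K (σ.symm^[n] ω) * Real.exp (-D.lam * n)) * R :=
            mul_le_mul (h_bs n) (h_bdB n) (norm_nonneg _)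
              (mul_nonneg (D.K_pos _).le (Real.exp_nonneg _))
    have unstable : ∀ n : ℕ, ‖(f' ω - f ω) - D.P ω (f' ω - f ω)‖ ≤
        D.K (σ^[n] ω) * Real.exp (-D.lam * n) * R := by
      intro n
      have hA : 𝒜 ω n ((f' ω - f ω) - D.P ω (f' ω - f ω)) =
          (f' (σ^[n] ω) - f (σ^[n] ω)) -
            D.P (σ^[n] ω) (f' (σ^[n] ω) - f (σ^[n] ω)) := by
        rw [fwd n, aux_equivarN hcoc D n ω, ← map_sub]
      have hinv := aux_inv_left_apply D (σ^[n] ω) n (f' ω - f ω)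
      rw [aux_symm_iter σ n ω] at hinv
      rw [hA] at hinv
      have hz : (f' ω - f ω) - D.P ω (f' ω - f ω) =
          ((D.B (σ^[n] ω) n).comp (ContinuousLinearMap.id ℝ X - D.P (σ^[n] ω)))
            (f' (σ^[n] ω) - f (σ^[n] ω)) := by
        rw [← hinv, ContinuousLinearMap.comp_apply, ContinuousLinearMap.sub_apply,
          ContinuousLinearMap.id_apply]
      rw [hz]
      calc ‖((D.B (σ^[n] ω) n).comp (ContinuousLinearMap.id ℝ X - D.P (σ^[n] ω)))
            (f' (σ^[n] ω) - f (σ^[n] ω))‖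
          ≤ ‖(D.B (σ^[n] ω) n).comp (ContinuousLinearMap.id ℝ X - D.P (σ^[n] ω))‖ *
            ‖f' (σ^[n] ω) - f (σ^[n] ω)‖ := ContinuousLinearMap.le_opNorm _ _
        _ ≤ (D.K (σ^[n] ω) * Real.exp (-D.lam * n)) * R :=
            mul_le_mul (h_bu n) (h_bdF n) (norm_nonneg _)
              (mul_nonneg (D.K_pos _).le (Real.exp_nonneg _))
    have hsumbd : ∀ n : ℕ, ‖f' ω - f ω‖ ≤
        D.K (σ.symm^[n] ω) * Real.exp (-D.lam * n) * R +
        D.K (σ^[n] ω) * Real.exp (-D.lam * n) * R := by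
      intro n
      have hdec : f' ω - f ω =
          D.P ω (f' ω - f ω) + ((f' ω - f ω) - D.P ω (f' ω - f ω)) := by abel
      calc ‖f' ω - f ω‖
          = ‖D.P ω (f' ω - f ω) + ((f' ω - f ω) - D.P ω (f' ω - f ω))‖ := by
            rw [← hdec]
        _ ≤ ‖D.P ω (f' ω - f ω)‖ + ‖(f' ω - f ω) - D.P ω (f' ω - f ω)‖ :=
            norm_add_le _ _
        _ ≤ _ := add_le_add (stable n) (unstable n)
    have l1 : Filter.Tendsto
        (fun n : ℕ => D.K (σ.symm^[n] ω) * Real.exp (-D.lam * n)) Filter.atTop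
        (nhds 0) := aux_decay (fun n => D.K_pos _) h_tn D.lam_pos
    have l2 : Filter.Tendsto
        (fun n : ℕ => D.K (σ^[n] ω) * Real.exp (-D.lam * n)) Filter.atTop
        (nhds 0) := aux_decay (fun n => D.K_pos _) h_tp D.lam_pos
    have hlim : Filter.Tendsto (fun n : ℕ =>
        D.K (σ.symm^[n] ω) * Real.exp (-D.lam * n) * R +
        D.K (σ^[n] ω) * Real.exp (-D.lam * n) * R) Filter.atTop (nhds 0) := by
      have := (l1.mul_const R).add (l2.mul_const R)
      simpa using this
    have h0 : ‖f' ω - f ω‖ ≤ 0 :=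
      ge_of_tendsto hlim (Filter.Eventually.of_forall hsumbd)
    have h1 : f' ω - f ω = 0 := norm_le_zero_iff.mp h0
    exact sub_eq_zero.mp h1
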